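/- Let (V, Ω) be a finite-dimensional symplectic vector space with subspaces C, E, K, L as above: C coisotropic, K = ker(Ω|_C), C = K ⊕ E (so Ω|_E is nondegenerate), E^⊥Ω = K ⊕ L with L Lagrangian. Then there is a linear symplectomorphism A : (V, Ω) → (E ⊕ K ⊕ K*, Ω|_E ⊕ Ω_can), where Ω_can is the canonical symplectic form on K ⊕ K* given by Ω_can((k₁,ξ₁),(k₂,ξ₂)) = ξ₂(k₁) − ξ₁(k₂), and A restricts to the identity on C = E ⊕ K. -/

import Mathlib

/-!
STATEMENT 3.  Let `(V, Ω)` be a finite-dimensional symplectic vector space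
with subspaces `C, E, K, L`: `C` coisotropic, `K = ker (Ω|_C)`, `C = K ⊕ E`
(so `Ω|_E` is nondegenerate), `E^⊥Ω = K ⊕ L` with `L` Lagrangian.  Then there
is a linear symplectomorphism `A : (V, Ω) → (E ⊕ K ⊕ K*, Ω|_E ⊕ Ω_can)`,
where `Ω_can((k₁,ξ₁),(k₂,ξ₂)) = ξ₂ k₁ − ξ₁ k₂` is the canonical symplectic
form on `K ⊕ K*`, and `A` restricts to the identity on `C = E ⊕ K`.
-/
theorem pmct_stmt3
    (V : Type*) [AddCommGroup V] [Module ℝ V] [FiniteDimensional ℝ V]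
    (Ω : LinearMap.BilinForm ℝ V) (halt : Ω.IsAlt) (hnd : Ω.Nondegenerate)
    (C E K L : Submodule ℝ V)
    -- `C` is coisotropic:
    (hco : Ω.orthogonal C ≤ C)
    -- `K` is the kernel of the restriction of `Ω` to `C`:
    (hK : K = C ⊓ Ω.orthogonal C)
    -- `C = K ⊕ E`:
    (hCKE : K ⊔ E = C) (hKE : K ⊓ E = ⊥)
    -- `L` is Lagrangian:
    (hLag : Ω.orthogonal L = L)
    -- `E^⊥Ω = K ⊕ L`:
    (hEperp : Ω.orthogonal E = K ⊔ L) (hKL : K ⊓ L = ⊥) :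
    ∃ A : V ≃ₗ[ℝ] E × K × Module.Dual ℝ K,
      -- `A` is a symplectomorphism onto `(E ⊕ K ⊕ K*, Ω|_E ⊕ Ω_can)`:
      (∀ v w : V,
        Ω v w = Ω ((A v).1 : V) ((A w).1 : V)
          + (A w).2.2 (A v).2.1 - (A v).2.2 (A w).2.1) ∧
      -- `A` restricts to the identity on `C = E ⊕ K`:
      (∀ e : E, A (e : V) = (e, 0, 0)) ∧
      (∀ k : K, A (k : V) = (0, k, 0)) := by
  have hrefl : Ω.IsRefl := halt.isRefl
  have hKorth : K ≤ Ω.orthogonal C := hK ▸ inf_le_right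
  have hKC : K ≤ C := hK ▸ inf_le_left
  have hEC : E ≤ C := hCKE ▸ le_sup_right
  have hLperpE : L ≤ Ω.orthogonal E := hEperp ▸ le_sup_right
  have hΩck : ∀ c ∈ C, ∀ k ∈ K, Ω c k = 0 := fun c hc k hk => hKorth hk c hc
  have hΩkc : ∀ k ∈ K, ∀ c ∈ C, Ω k c = 0 := fun k hk c hc => hrefl _ _ (hΩck c hc k hk)
  have hΩel : ∀ e ∈ E, ∀ l ∈ L, Ω e l = 0 := fun e he l hl => hLperpE hl e he
  have hΩle : ∀ l ∈ L, ∀ e ∈ E, Ω l e = 0 := fun l hl e he => hrefl _ _ (hΩel e he l hl)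
  have hΩll : ∀ l ∈ L, ∀ l' ∈ L, Ω l l' = 0 := by
    intro l hl l' hl'
    rw [← hLag] at hl'
    exact hl' l hl
  -- E is disjoint from its orthogonal
  have hEdis : E ⊓ Ω.orthogonal E = ⊥ := by
    rw [eq_bot_iff]
    rintro x ⟨hxE, hxO⟩
    have hxK : x ∈ K := by
      rw [hK]
      refine ⟨hEC hxE, fun c hc => ?_⟩
      rw [← hCKE] at hc
      obtain ⟨k, hk, e, he, rfl⟩ := Submodule.mem_sup.mp hc
      have : Ω (k + e) x = Ω k x + Ω e x := by simp
      rw [this,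
        hΩkc k hk x (hEC hxE), hxO e he, add_zero]
    have : x ∈ K ⊓ E := ⟨hxK, hxE⟩
    rwa [hKE] at this
  have hcompl : IsCompl E (Ω.orthogonal E) :=
    (Ω.restrict_nondegenerate_iff_isCompl_orthogonal hrefl).mp
      (Ω.nondegenerate_restrict_of_disjoint_orthogonal hrefl (disjoint_iff.mpr hEdis))
  -- the sum map f : E × K × L → V
  set f : E × K × L →ₗ[ℝ] V := E.subtype.coprod (K.subtype.coprod L.subtype) with hf
  have hfapp : ∀ p : E × K × L, f p = (p.1 : V) + (p.2.1 : V) + (p.2.2 : V) := by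
    intro p; simp [hf, add_assoc]
  have hfinj : Function.Injective f := by
    rw [← LinearMap.ker_eq_bot, eq_bot_iff]
    rintro ⟨e, k, l⟩ hp
    simp only [LinearMap.mem_ker] at hp
    have h0 : (e : V) + ((k : V) + (l : V)) = 0 := by
      rw [← add_assoc, ← hfapp (e, k, l)]; exact hp
    have hkl : (k : V) + (l : V) ∈ K ⊔ L := Submodule.add_mem_sup k.2 l.2
    have he0 : (e : V) = 0 := by
      have hmem : (e : V) ∈ E ⊓ Ω.orthogonal E := by
        refine ⟨e.2, ?_⟩
        rw [hEperp]
        rw [eq_neg_of_add_eq_zero_left h0]; exact neg_mem hkl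
      rw [hEdis] at hmem; exact hmem
    have hk0 : (k : V) = 0 := by
      have hmem : (k : V) ∈ K ⊓ L := by
        refine ⟨k.2, ?_⟩
        rw [he0, zero_add] at h0
        rw [eq_neg_of_add_eq_zero_left h0]; exact neg_mem l.2
      rw [hKL] at hmem; exact hmem
    have hl0 : (l : V) = 0 := by rw [he0, hk0] at h0; simpa using h0
    simp only [Submodule.mem_bot, Prod.mk_eq_zero]
    exact ⟨Subtype.ext he0, Subtype.ext hk0, Subtype.ext hl0⟩
  have hfsurj : Function.Surjective f := by
    rw [← LinearMap.range_eq_top, hf, LinearMap.range_coprod, LinearMap.range_coprod,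
      Submodule.range_subtype, Submodule.range_subtype, Submodule.range_subtype,
      ← hEperp]
    exact hcompl.sup_eq_top
  set fe : (E × K × L) ≃ₗ[ℝ] V := LinearEquiv.ofBijective f ⟨hfinj, hfsurj⟩ with hfe
  -- the map I : L → K*
  set Imap : L →ₗ[ℝ] Module.Dual ℝ K := K.subtype.dualMap ∘ₗ (Ω.flip ∘ₗ L.subtype) with hI
  have hIapp : ∀ (l : L) (k : K), Imap l k = Ω (k : V) (l : V) := by intro l k; rfl
  have hIinj : Function.Injective Imap := by
    rw [← LinearMap.ker_eq_bot, eq_bot_iff]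
    rintro l hl
    simp only [LinearMap.mem_ker] at hl
    have hΩkl : ∀ k ∈ K, Ω k (l : V) = 0 := by
      intro k hk
      have := congrArg (fun ξ => ξ ⟨k, hk⟩) hl
      simpa [hIapp] using this
    have : (l : V) = 0 := by
      apply hnd.1
      intro w
      obtain ⟨⟨e, k, l'⟩, rfl⟩ := fe.surjective w
      have : fe (e, k, l') = (e : V) + (k : V) + (l' : V) := hfapp _
      rw [this]
      have h1 : Ω (l : V) (e : V) = 0 := hΩle _ l.2 _ e.2
      have h2 : Ω (l : V) (k : V) = 0 := hrefl _ _ (hΩkl _ k.2)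
      have h3 : Ω (l : V) (l' : V) = 0 := hΩll _ l.2 _ l'.2
      simp [h1, h2, h3]
    simpa using Subtype.ext this
  have hIsurj : Function.Surjective Imap := by
    intro ξ
    obtain ⟨η, hη⟩ := LinearMap.dualMap_surjective_of_injective K.injective_subtype ξ
    set v : V := (Ω.flip.toDual hnd.flip).symm η with hv
    have hvw : ∀ w : V, Ω w v = η w := fun w =>
      LinearMap.BilinForm.apply_toDual_symm_apply (B := Ω.flip) (hB := hnd.flip) η w
    obtain ⟨⟨e, k, l⟩, hp⟩ := fe.surjective v
    refine ⟨l, ?_⟩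
    ext k'
    have hfekl : v = (e : V) + (k : V) + (l : V) := by rw [← hp]; exact (hfapp _)
    have : Ω (k' : V) v = Ω (k' : V) (l : V) := by
      rw [hfekl]
      have h1 : Ω (k' : V) (e : V) = 0 := hΩkc _ k'.2 _ (hEC e.2)
      have h2 : Ω (k' : V) (k : V) = 0 := hΩkc _ k'.2 _ (hKC k.2)
      simp [h1, h2]
    rw [hIapp, ← this, hvw, ← hη]
    rfl
  set Ie : L ≃ₗ[ℝ] Module.Dual ℝ K := LinearEquiv.ofBijective Imap ⟨hIinj, hIsurj⟩ with hIe
  set A : V ≃ₗ[ℝ] E × K × Module.Dual ℝ K :=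
    fe.symm.trans ((LinearEquiv.refl ℝ E).prodCongr ((LinearEquiv.refl ℝ K).prodCongr Ie)) with hA
  have hAval : ∀ p : E × K × L, A (fe p) = (p.1, p.2.1, Ie p.2.2) := by
    intro p
    rw [hA]
    simp only [LinearEquiv.trans_apply, LinearEquiv.symm_apply_apply]
    rfl
  refine ⟨A, ?_, ?_, ?_⟩
  · intro v w
    obtain ⟨⟨e, k, l⟩, rfl⟩ := fe.surjective v
    obtain ⟨⟨e', k', l'⟩, rfl⟩ := fe.surjective w
    rw [hAval, hAval]
    have hv : fe (e, k, l) = (e : V) + (k : V) + (l : V) := hfapp _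
    have hw : fe (e', k', l') = (e' : V) + (k' : V) + (l' : V) := hfapp _
    rw [hv, hw]
    have z1 : Ω (e : V) (k' : V) = 0 := hΩck _ (hEC e.2) _ k'.2
    have z2 : Ω (e : V) (l' : V) = 0 := hΩel _ e.2 _ l'.2
    have z3 : Ω (k : V) (e' : V) = 0 := hΩkc _ k.2 _ (hEC e'.2)
    have z4 : Ω (k : V) (k' : V) = 0 := hΩkc _ k.2 _ (hKC k'.2)
    have z5 : Ω (l : V) (e' : V) = 0 := hΩle _ l.2 _ e'.2
    have z6 : Ω (l : V) (l' : V) = 0 := hΩll _ l.2 _ l'.2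
    have halt' : Ω (k' : V) (l : V) = -Ω (l : V) (k' : V) := by
      rw [← halt.neg_eq]
    show _ = _ + (Ie l') k - (Ie l) k'
    have hIel : (Ie l) k' = Ω (k' : V) (l : V) := hIapp l k'
    have hIel' : (Ie l') k = Ω (k : V) (l' : V) := hIapp l' k
    rw [hIel, hIel']
    simp only [map_add, LinearMap.add_apply]
    rw [z1, z2, z3, z4, z5, z6, halt']
    ring
  · intro e
    have h : fe (e, 0, 0) = (e : V) := by
      have := hfapp (e, 0, 0); simp at this; exact this
    rw [← h, hAval]; simp
  · intro k
    have h : fe ((0 : E), k, (0 : L)) = (k : V) := by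
      have := hfapp ((0 : E), k, (0 : L)); simp at this; exact this
    rw [← h, hAval]; simp
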